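/- arXiv:1310.6374 — 3 statements merged into one kernel-verified Lean document; each statement's English description precedes it below -/
import Mathlib

section
/- For g(x) = 1 - ((2m+1)!/(m!)^2) ∫₀ˣ t^m (1-t)^m dt, one has ∫₀¹ (g^(m+1)(u))² du = (2m)!(2m+1)!/(m!)². -/
open Polynomial intervalIntegral

noncomputable def gsmooth (m : ℕ) (x : ℝ) : ℝ :=
  1 - ((Nat.factorial (2 * m + 1) : ℝ) / (Nat.factorial m : ℝ) ^ 2) *
    ∫ t in (0:ℝ)..x, t ^ m * (1 - t) ^ m

/-- Beta function at natural arguments, by induction + integration by parts. -/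
lemma beta_nat (b : ℕ) : ∀ a : ℕ, (∫ x in (0:ℝ)..1, x ^ a * (1 - x) ^ b)
    = (Nat.factorial a * Nat.factorial b : ℝ) / Nat.factorial (a + b + 1) := by
  induction b with
  | zero =>
    intro a
    simp [integral_pow, Nat.factorial_succ]
    rw [eq_div_iff (by positivity)]
    push_cast
    field_simp
  | succ b ih =>
    intro a
    have hu : ∀ x ∈ Set.uIcc (0:ℝ) 1, HasDerivAt (fun x : ℝ => x ^ (a+1))
        ((a+1 : ℝ) * x ^ a) x := by
      intro x _
      simpa using hasDerivAt_pow (a+1) x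
    have hv : ∀ x ∈ Set.uIcc (0:ℝ) 1, HasDerivAt (fun x : ℝ => (1-x) ^ (b+1))
        (-((b+1 : ℝ) * (1-x) ^ b)) x := by
      intro x _
      have h1 : HasDerivAt (fun x : ℝ => 1 - x) (-1) x := by
        simpa using (hasDerivAt_id x).const_sub 1
      have := h1.fun_pow (b+1)
      simpa [mul_comm] using this
    have hbp := integral_mul_deriv_eq_deriv_mul hu hv
      (by apply Continuous.intervalIntegrable; continuity)
      (by apply Continuous.intervalIntegrable; continuity)
    simp only [one_pow, zero_pow, Nat.succ_ne_zero, mul_zero, zero_mul, sub_zero, sub_self,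
      one_mul, mul_one] at hbp
    -- hbp : ∫ x^(a+1) * (-( (b+1)*(1-x)^b)) = 0 - 0 - ∫ (a+1) x^a (1-x)^(b+1)
    have h2 : (b+1 : ℝ) * ∫ x in (0:ℝ)..1, x ^ (a+1) * (1-x) ^ b
        = (a+1 : ℝ) * ∫ x in (0:ℝ)..1, x ^ a * (1-x) ^ (b+1) := by
      have l1 : (∫ x in (0:ℝ)..1, x ^ (a+1) * (-((b+1:ℝ) * (1-x) ^ b)))
          = -((b+1:ℝ) * ∫ x in (0:ℝ)..1, x ^ (a+1) * (1-x) ^ b) := by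
        rw [← integral_const_mul, ← integral_neg]
        congr 1; funext x; ring
      have l2 : (∫ x in (0:ℝ)..1, (a+1:ℝ) * x ^ a * (1-x) ^ (b+1))
          = (a+1:ℝ) * ∫ x in (0:ℝ)..1, x ^ a * (1-x) ^ (b+1) := by
        rw [← integral_const_mul]
        congr 1; funext x; ring
      rw [l1, l2] at hbp
      norm_num at hbp
      linarith
    have ha : (a+1:ℝ) ≠ 0 := by positivity
    have := ih (a+1)
    rw [show a + 1 + b + 1 = a + (b+1) + 1 by ring] at this
    rw [this] at h2
    have key : (∫ x in (0:ℝ)..1, x ^ a * (1-x) ^ (b+1))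
        = (b+1:ℝ)/(a+1:ℝ) * ((Nat.factorial (a+1) * Nat.factorial b : ℝ)
            / Nat.factorial (a + (b+1) + 1)) := by
      field_simp at h2 ⊢
      linarith
    rw [key, Nat.factorial_succ a, Nat.factorial_succ b]
    push_cast
    have hf : (Nat.factorial (a + (b+1) + 1) : ℝ) ≠ 0 := by positivity
    field_simp

noncomputable def Ppoly (m : ℕ) : Polynomial ℝ := X ^ m * (1 - X) ^ m

lemma dvd_deriv_step {a : ℝ} {n : ℕ} {q : Polynomial ℝ}
    (h : (X - C a) ^ (n+1) ∣ q) : (X - C a) ^ n ∣ derivative q := by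
  obtain ⟨r, rfl⟩ := h
  refine ⟨(n+1 : ℝ[X]) * r + (X - C a) * derivative r, ?_⟩
  rw [derivative_mul, derivative_pow, derivative_X_sub_C]
  simp only [map_natCast]
  push_cast
  ring

lemma dvd_iter (a : ℝ) (m : ℕ) (q : Polynomial ℝ) (h : (X - C a) ^ m ∣ q) :
    ∀ j, j ≤ m → (X - C a) ^ (m - j) ∣ derivative^[j] q := by
  intro j
  induction j with
  | zero => intro _; simpa using h
  | succ j ih =>
    intro hj
    have h1 := ih (Nat.le_of_succ_le hj)
    rw [Function.iterate_succ_apply']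
    have : m - j = (m - (j+1)) + 1 := by omega
    rw [this] at h1
    exact dvd_deriv_step h1

lemma eval_zero_of_lt (m j : ℕ) (hj : j < m) :
    eval 0 (derivative^[j] (Ppoly m)) = 0 := by
  have h0 : (X - C (0:ℝ)) ^ m ∣ Ppoly m := ⟨(1 - X) ^ m, by simp [Ppoly]⟩
  have := dvd_iter 0 m (Ppoly m) h0 j (le_of_lt hj)
  have hd : (X - C (0:ℝ)) ∣ derivative^[j] (Ppoly m) :=
    dvd_trans (dvd_pow_self _ (by omega)) this
  simpa using (dvd_iff_isRoot.mp hd)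

lemma eval_one_of_lt (m j : ℕ) (hj : j < m) :
    eval 1 (derivative^[j] (Ppoly m)) = 0 := by
  have h0 : (X - C (1:ℝ)) ^ m ∣ Ppoly m := by
    refine ⟨(-1) ^ m * X ^ m, ?_⟩
    have h1 : (1 - X : ℝ[X]) = -(X - C 1) := by simp
    rw [Ppoly, h1, neg_pow]
    ring
  have := dvd_iter 1 m (Ppoly m) h0 j (le_of_lt hj)
  have hd : (X - C (1:ℝ)) ∣ derivative^[j] (Ppoly m) :=
    dvd_trans (dvd_pow_self _ (by omega)) this
  simpa using (dvd_iff_isRoot.mp hd)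

lemma natDegree_Ppoly (m : ℕ) : (Ppoly m).natDegree = 2 * m := by
  have hX : (X : ℝ[X]) ^ m ≠ 0 := pow_ne_zero _ X_ne_zero
  have h1X : (1 - X : ℝ[X]) ≠ 0 := fun h => by
    have := congrArg (fun p => coeff p 1) h
    simp [coeff_one] at this
  rw [Ppoly, natDegree_mul hX (pow_ne_zero _ h1X)]
  rw [natDegree_pow, natDegree_pow, natDegree_X]
  have : (1 - X : ℝ[X]).natDegree = 1 := by
    rw [show (1 - X : ℝ[X]) = -(X - C 1) by simp, natDegree_neg, natDegree_X_sub_C]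
  rw [this]; ring

lemma coeff_top_Ppoly (m : ℕ) : (Ppoly m).coeff (2 * m) = (-1 : ℝ) ^ m := by
  have h1 : (Ppoly m).coeff (2*m) = (Ppoly m).leadingCoeff := by
    rw [leadingCoeff, natDegree_Ppoly]
  rw [h1, Ppoly, leadingCoeff_mul, leadingCoeff_pow, leadingCoeff_pow, leadingCoeff_X]
  have : (1 - X : ℝ[X]).leadingCoeff = -1 := by
    rw [show (1 - X : ℝ[X]) = -(X - C 1) by simp, leadingCoeff_neg,
      leadingCoeff_X_sub_C]
  rw [this]; simp

lemma iter_deriv_top (m : ℕ) :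
    derivative^[2 * m] (Ppoly m) = C ((-1:ℝ) ^ m * Nat.factorial (2*m)) := by
  have hdeg : (derivative^[2*m] (Ppoly m)).natDegree = 0 := by
    have := natDegree_iterate_derivative (Ppoly m) (2*m)
    rw [natDegree_Ppoly] at this
    omega
  have := Polynomial.eq_C_of_natDegree_le_zero (le_of_eq hdeg)
  rw [this, coeff_iterate_derivative, zero_add, Nat.descFactorial_self, coeff_top_Ppoly]
  congr 1
  rw [nsmul_eq_mul]
  ring

lemma key_ibp (m : ℕ) : ∀ k, k ≤ m →
    (∫ u in (0:ℝ)..1, eval u (derivative^[m] (Ppoly m)) * eval u (derivative^[m] (Ppoly m)))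
    = (-1:ℝ) ^ k * ∫ u in (0:ℝ)..1,
        eval u (derivative^[m - k] (Ppoly m)) * eval u (derivative^[m + k] (Ppoly m)) := by
  intro k
  induction k with
  | zero => intro _; simp
  | succ k ih =>
    intro hk
    rw [ih (Nat.le_of_succ_le hk)]
    have hu : ∀ x ∈ Set.uIcc (0:ℝ) 1,
        HasDerivAt (fun x => eval x (derivative^[m - (k+1)] (Ppoly m)))
          (eval x (derivative^[m - k] (Ppoly m))) x := by
      intro x _
      rw [show m - k = (m - (k+1)) + 1 by omega, Function.iterate_succ_apply']
      exact (derivative^[m - (k+1)] (Ppoly m)).hasDerivAt x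
    have hv : ∀ x ∈ Set.uIcc (0:ℝ) 1,
        HasDerivAt (fun x => eval x (derivative^[m + k] (Ppoly m)))
          (eval x (derivative^[m + k + 1] (Ppoly m))) x := by
      intro x _
      rw [Function.iterate_succ_apply']
      exact (derivative^[m + k] (Ppoly m)).hasDerivAt x
    have hbp := integral_mul_deriv_eq_deriv_mul hu hv
      ((Polynomial.continuous _).intervalIntegrable _ _)
      ((Polynomial.continuous _).intervalIntegrable _ _)
    rw [eval_zero_of_lt m (m - (k+1)) (by omega), eval_one_of_lt m (m - (k+1)) (by omega)] at hbp
    simp only [zero_mul, mul_zero, sub_zero, zero_sub] at hbp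
    -- hbp : ∫ f_{m-(k+1)} * f_{m+k+1} = - ∫ f_{m-k} * f_{m+k}
    have h2 : (∫ u in (0:ℝ)..1,
        eval u (derivative^[m - k] (Ppoly m)) * eval u (derivative^[m + k] (Ppoly m)))
        = - ∫ u in (0:ℝ)..1,
            eval u (derivative^[m - (k+1)] (Ppoly m)) * eval u (derivative^[m + (k+1)] (Ppoly m)) := by
      rw [show m + (k+1) = m + k + 1 by omega, hbp]
      ring
    rw [h2, pow_succ]
    ring

lemma iterPoly (n : ℕ) (p : Polynomial ℝ) :
    iteratedDeriv n (fun x => eval x p) = fun x => eval x (derivative^[n] p) := by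
  induction n generalizing p with
  | zero => simp
  | succ n ih =>
    rw [iteratedDeriv_succ', show deriv (fun x => eval x p) = fun x => eval x (derivative p) from
      funext fun x => Polynomial.deriv p, ih, Function.iterate_succ_apply]

lemma deriv_gsmooth (m : ℕ) (x : ℝ) :
    HasDerivAt (gsmooth m)
      (-((Nat.factorial (2 * m + 1) : ℝ) / (Nat.factorial m : ℝ) ^ 2) * eval x (Ppoly m)) x := by
  have hc : Continuous (fun t : ℝ => t ^ m * (1 - t) ^ m) := by continuity
  have h1 : HasDerivAt (fun y : ℝ => ∫ t in (0:ℝ)..y, t ^ m * (1 - t) ^ m)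
      (x ^ m * (1 - x) ^ m) x :=
    intervalIntegral.integral_hasDerivAt_right (hc.intervalIntegrable _ _)
      hc.aestronglyMeasurable.stronglyMeasurableAtFilter hc.continuousAt
  have h2 := (h1.const_mul ((Nat.factorial (2 * m + 1) : ℝ) / (Nat.factorial m : ℝ) ^ 2)).const_sub 1
  have he : eval x (Ppoly m) = x ^ m * (1 - x) ^ m := by simp [Ppoly]
  rw [he]
  refine h2.congr_deriv ?_
  ring

theorem stmt_4 (m : ℕ) (hm : 0 < m) :
    ∫ u in (0:ℝ)..1, (iteratedDeriv (m + 1) (gsmooth m) u) ^ 2 =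
      (Nat.factorial (2 * m) : ℝ) * (Nat.factorial (2 * m + 1) : ℝ) /
        (Nat.factorial m : ℝ) ^ 2 := by
  set C0 : ℝ := (Nat.factorial (2 * m + 1) : ℝ) / (Nat.factorial m : ℝ) ^ 2 with hC0
  have hiter : iteratedDeriv (m + 1) (gsmooth m)
      = fun u => -C0 * eval u (derivative^[m] (Ppoly m)) := by
    have hd : deriv (gsmooth m) = fun x => eval x (C (-C0) * Ppoly m) := by
      funext x
      rw [(deriv_gsmooth m x).deriv]
      simp [hC0]
    rw [iteratedDeriv_succ', hd, iterPoly, iterate_derivative_C_mul]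
    funext u
    simp
  have hbeta := beta_nat m m
  have hI : (∫ u in (0:ℝ)..1,
      eval u (derivative^[m] (Ppoly m)) * eval u (derivative^[m] (Ppoly m)))
      = (Nat.factorial (2 * m) : ℝ) * (Nat.factorial m : ℝ) ^ 2
          / (Nat.factorial (2 * m + 1) : ℝ) := by
    rw [key_ibp m m le_rfl, Nat.sub_self,
      show m + m = 2 * m by ring, iter_deriv_top, Function.iterate_zero_apply]
    have h1 : (∫ u in (0:ℝ)..1, eval u (Ppoly m) * eval u (C ((-1:ℝ)^m * Nat.factorial (2*m))))
        = ((-1:ℝ)^m * Nat.factorial (2*m)) * ∫ u in (0:ℝ)..1, u ^ m * (1-u) ^ m := by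
      rw [← integral_const_mul]
      congr 1
      funext u
      simp [Ppoly]
      ring
    rw [h1, hbeta, show m + m + 1 = 2 * m + 1 by ring]
    rw [← mul_assoc, ← mul_assoc, show (-1:ℝ)^m * (-1:ℝ)^m = 1 by
      rw [← pow_add, ← two_mul, pow_mul]; norm_num]
    rw [one_mul]
    ring
  have hsq : (∫ u in (0:ℝ)..1, (iteratedDeriv (m + 1) (gsmooth m) u) ^ 2)
      = C0 ^ 2 * ∫ u in (0:ℝ)..1,
          eval u (derivative^[m] (Ppoly m)) * eval u (derivative^[m] (Ppoly m)) := by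
    rw [hiter, ← integral_const_mul]
    congr 1
    funext u
    ring
  rw [hsq, hI, hC0]
  have h1 : (Nat.factorial m : ℝ) ≠ 0 := by positivity
  have h2 : (Nat.factorial (2 * m + 1) : ℝ) ≠ 0 := by positivity
  field_simp
end

section
/- For any real numbers 0 < a < b and nonnegative integer m, M(a,b,m) ≤ sqrt((b^(2m+3) - a^(2m+3))/((b-a)(2m+3))) · sqrt((2m)!(2m+1)!)/m!, where M(a,b,m) = ((2m+1)!/m!) ∫₀¹ |P_m(1-2u)| ((b-a)u + a)^(m+1) du and P_m is the m-th Legendre polynomial. -/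
open Polynomial MeasureTheory intervalIntegral

/-- The `m`-th Legendre polynomial via Rodrigues' formula. -/
noncomputable def legendreP (m : ℕ) (x : ℝ) : ℝ :=
  (1 / (2 ^ m * (Nat.factorial m : ℝ))) *
    iteratedDeriv m (fun y : ℝ => (y ^ 2 - 1) ^ m) x

noncomputable def Mconst (a b : ℝ) (m : ℕ) : ℝ :=
  ((Nat.factorial (2 * m + 1) : ℝ) / (Nat.factorial m : ℝ)) *
    ∫ u in (0:ℝ)..1, |legendreP m (1 - 2 * u)| * ((b - a) * u + a) ^ (m + 1)





noncomputable def PP (m : ℕ) : ℝ[X] := ((X:ℝ[X])^2 - 1)^m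
noncomputable def qq (m k : ℕ) : ℝ[X] := Polynomial.derivative^[k] (PP m)

lemma iteratedDeriv_polyeval (n : ℕ) (p : ℝ[X]) :
    iteratedDeriv n (fun y => p.eval y) = fun x => (Polynomial.derivative^[n] p).eval x := by
  induction n generalizing p with
  | zero => simp [iteratedDeriv_zero]
  | succ n ih =>
    rw [iteratedDeriv_succ']
    have : deriv (fun y => p.eval y) = fun y => p.derivative.eval y := by
      funext y; exact Polynomial.deriv (p := p)
    rw [this, ih, Function.iterate_succ_apply]

lemma qq_deriv (m k : ℕ) : (qq m k).derivative = qq m (k+1) := by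
  rw [qq, qq, Function.iterate_succ_apply']

lemma qq_root (m : ℕ) {j : ℕ} (hj : j < m) {c : ℝ} (hc : c = 1 ∨ c = -1) :
    (qq m j).eval c = 0 := by
  have hdvd : (X - C c) ^ m ∣ PP m := by
    apply pow_dvd_pow_of_dvd
    rcases hc with h | h <;>
      exact ⟨X + C c, by subst h; push_cast [Polynomial.C_1, Polynomial.C_neg]; ring⟩
  have h2 : (X - C c) ^ (m - j) ∣ qq m j :=
    Polynomial.pow_sub_dvd_iterate_derivative_of_pow_dvd j hdvd
  have h3 : (X - C c) ∣ qq m j :=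
    dvd_trans (dvd_pow_self _ (Nat.sub_ne_zero_of_lt hj)) h2
  obtain ⟨r, hr⟩ := h3
  simp [hr]

lemma PP_natDegree (m : ℕ) : (PP m).natDegree = 2 * m := by
  rw [PP]
  have h : ((X:ℝ[X])^2 - 1).natDegree = 2 := by
    simpa using Polynomial.natDegree_X_pow_sub_C (n := 2) (r := (1:ℝ))
  rw [Polynomial.natDegree_pow, h, mul_comm]

lemma PP_monic (m : ℕ) : (PP m).Monic := by
  apply Polynomial.Monic.pow
  simpa using Polynomial.monic_X_pow_sub_C (1:ℝ) (two_ne_zero)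

lemma qq_top (m : ℕ) : qq m (2*m) = C ((Nat.factorial (2*m) : ℝ)) := by
  have hdeg : (qq m (2*m)).natDegree = 0 := by
    have := Polynomial.natDegree_iterate_derivative (PP m) (2*m)
    rw [PP_natDegree] at this
    simpa [qq] using Nat.le_zero.mp (by simpa using this)
  have := Polynomial.eq_C_of_natDegree_le_zero (le_of_eq hdeg)
  rw [this]
  congr 1
  rw [qq, Polynomial.coeff_iterate_derivative]
  simp [Nat.descFactorial_self, ← PP_natDegree m, Polynomial.Monic.coeff_natDegree (PP_monic m)]

lemma int_one_sub_sq (m : ℕ) :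
    ∫ x in (-1:ℝ)..1, (1 - x^2)^m =
      2^(2*m+1) * (Nat.factorial m : ℝ)^2 / (Nat.factorial (2*m+1) : ℝ) := by
  induction m with
  | zero => simp; norm_num
  | succ m ih =>
    set I0 := ∫ x in (-1:ℝ)..1, (1 - x^2)^m with hI0
    set I1 := ∫ x in (-1:ℝ)..1, (1 - x^2)^(m+1) with hI1
    have ibp : I1 = (((m:ℝ)+1) * 2) * (I0 - I1) := by
      have hu : ∀ x ∈ Set.uIcc (-1:ℝ) 1,
          HasDerivAt (fun x : ℝ => (1 - x^2)^(m+1))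
            ((((m:ℝ)+1) * (1 - x^2)^m) * (-2*x)) x := by
        intro x _
        have h1 : HasDerivAt (fun x : ℝ => 1 - x^2) (-2*x) x := by
          simpa using ((hasDerivAt_pow 2 x).const_sub 1)
        have := h1.fun_pow (m+1)
        simpa [mul_comm, mul_assoc, mul_left_comm] using this
      have hv : ∀ x ∈ Set.uIcc (-1:ℝ) 1, HasDerivAt (fun x : ℝ => x) 1 x := by
        intro x _; simpa using hasDerivAt_id' x
      have h := intervalIntegral.integral_mul_deriv_eq_deriv_mul hu hv
        (by apply Continuous.intervalIntegrable; fun_prop)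
        (by apply Continuous.intervalIntegrable; fun_prop)
      simp only [mul_one] at h
      have key : ∫ x in (-1:ℝ)..1, (((m:ℝ)+1) * (1 - x^2)^m) * (-2*x) * x
          = -(((m:ℝ)+1) * 2) * (I0 - I1) := by
        rw [hI0, hI1, ← intervalIntegral.integral_sub
          (by apply Continuous.intervalIntegrable; fun_prop)
          (by apply Continuous.intervalIntegrable; fun_prop),
          ← intervalIntegral.integral_const_mul]
        apply intervalIntegral.integral_congr
        intro x _
        have hx : (1 - x^2)^(m+1) = (1-x^2) * (1-x^2)^m := by ring
        linear_combination (2*((m:ℝ)+1)) * hx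
      rw [key] at h
      have hb : ((1:ℝ) - 1^2)^(m+1) = 0 := by norm_num
      have hb2 : ((1:ℝ) - (-1)^2)^(m+1) = 0 := by norm_num
      rw [hb, hb2] at h
      rw [hI1]
      linear_combination h
    have solve : I1 = (((m:ℝ)+1) * 2) / (2*(m:ℝ)+3) * I0 := by
      have h3 : (2*(m:ℝ)+3) ≠ 0 := by positivity
      field_simp
      linarith [ibp]
    rw [solve, ih]
    have e1 : (Nat.factorial (m+1) : ℝ) = ((m:ℝ)+1) * (Nat.factorial m : ℝ) := by
      push_cast [Nat.factorial_succ]; ring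
    have e2 : (Nat.factorial (2*(m+1)+1) : ℝ)
        = (2*(m:ℝ)+3) * ((2*(m:ℝ)+2)) * (Nat.factorial (2*m+1) : ℝ) := by
      have : 2*(m+1)+1 = (2*m+1) + 1 + 1 := by ring
      rw [this]
      push_cast [Nat.factorial_succ]
      ring
    rw [e1, e2]
    have h1 : (Nat.factorial (2*m+1) : ℝ) ≠ 0 := by positivity
    have h3 : (2*(m:ℝ)+3) ≠ 0 := by positivity
    have h2 : (2*(m:ℝ)+2) ≠ 0 := by positivity
    field_simp
    ring


lemma J_step (m k : ℕ) (hk : k < m) :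
    (∫ x in (-1:ℝ)..1, (qq m (m+k)).eval x * (qq m (m-k)).eval x)
      = - ∫ x in (-1:ℝ)..1, (qq m (m+k+1)).eval x * (qq m (m-k-1)).eval x := by
  have hmk : m - k - 1 + 1 = m - k := by omega
  have hu : ∀ x ∈ Set.uIcc (-1:ℝ) 1,
      HasDerivAt (fun x : ℝ => (qq m (m+k)).eval x) ((qq m (m+k+1)).eval x) x := by
    intro x _
    simpa [qq_deriv] using (qq m (m+k)).hasDerivAt x
  have hv : ∀ x ∈ Set.uIcc (-1:ℝ) 1,
      HasDerivAt (fun x : ℝ => (qq m (m-k-1)).eval x) ((qq m (m-k)).eval x) x := by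
    intro x _
    have := (qq m (m-k-1)).hasDerivAt x
    rwa [qq_deriv, hmk] at this
  have h := intervalIntegral.integral_mul_deriv_eq_deriv_mul hu hv
    (by apply Continuous.intervalIntegrable; exact (qq m (m+k+1)).continuous)
    (by apply Continuous.intervalIntegrable; exact (qq m (m-k)).continuous)
  have hz1 : (qq m (m-k-1)).eval 1 = 0 := qq_root m (j := m-k-1) (by omega) (Or.inl rfl)
  have hz2 : (qq m (m-k-1)).eval (-1) = 0 := qq_root m (j := m-k-1) (by omega) (Or.inr rfl)
  rw [hz1, hz2] at h
  simpa using h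

lemma J_all (m : ℕ) : ∀ d j : ℕ, j + d = m →
    (∫ x in (-1:ℝ)..1, (qq m (m+j)).eval x * (qq m (m-j)).eval x)
      = (-1:ℝ)^d * ∫ x in (-1:ℝ)..1, (qq m (2*m)).eval x * (qq m 0).eval x := by
  intro d
  induction d with
  | zero =>
    intro j hj
    have hj' : j = m := by omega
    rw [hj', show m + m = 2*m by ring, Nat.sub_self]
    simp
  | succ d ih =>
    intro j hj
    have hlt : j < m := by omega
    rw [J_step m j hlt]
    have h2 : (j+1) + d = m := by omega
    have h3 := ih (j+1) h2
    rw [show m + j + 1 = m + (j+1) by ring, show m - j - 1 = m - (j+1) by omega, h3]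
    ring

lemma J_zero (m : ℕ) :
    (∫ x in (-1:ℝ)..1, ((qq m m).eval x)^2)
      = (Nat.factorial (2*m) : ℝ) * (2^(2*m+1) * (Nat.factorial m : ℝ)^2
          / (Nat.factorial (2*m+1) : ℝ)) := by
  have h0 := J_all m m 0 (by omega)
  simp only [Nat.add_zero, Nat.sub_zero] at h0
  have hq0 : qq m 0 = PP m := rfl
  rw [hq0, qq_top] at h0
  have hPP : ∀ x : ℝ, (PP m).eval x = (x^2-1)^m := by intro x; simp [PP]
  have h1 : (∫ x in (-1:ℝ)..1, (C ((Nat.factorial (2*m)):ℝ)).eval x * (PP m).eval x)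
      = ((Nat.factorial (2*m) : ℝ) * (-1:ℝ)^m) * ∫ x in (-1:ℝ)..1, (1 - x^2)^m := by
    rw [← intervalIntegral.integral_const_mul]
    apply intervalIntegral.integral_congr
    intro x _
    simp only [eval_C, hPP]
    have hxx : (x^2 - 1)^m = (-1:ℝ)^m * (1 - x^2)^m := by
      rw [show x^2 - 1 = -1 * (1 - x^2) by ring, mul_pow]
    rw [hxx]; ring
  rw [h1, int_one_sub_sq] at h0
  rw [show (∫ x in (-1:ℝ)..1, ((qq m m).eval x)^2)
      = ∫ x in (-1:ℝ)..1, (qq m m).eval x * (qq m m).eval x from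
    intervalIntegral.integral_congr (fun x _ => by ring)]
  have hsq : ((-1:ℝ)^m)^2 = 1 := by
    rw [← pow_mul, mul_comm, pow_mul]; norm_num
  linear_combination h0 + ((Nat.factorial (2*m) : ℝ) *
    (2^(2*m+1) * (Nat.factorial m : ℝ)^2 / (Nat.factorial (2*m+1) : ℝ))) * hsq


lemma legendreP_eq (m : ℕ) :
    legendreP m = fun x => (1 / (2^m * (Nat.factorial m : ℝ))) * (qq m m).eval x := by
  funext x
  rw [legendreP]
  congr 1
  have h : (fun y : ℝ => (y^2 - 1)^m) = fun y => (PP m).eval y := by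
    funext y; simp [PP]
  rw [h, iteratedDeriv_polyeval]
  rfl

lemma legendreP_cont (m : ℕ) : Continuous (legendreP m) := by
  rw [legendreP_eq]
  exact continuous_const.mul (qq m m).continuous

lemma legendre_norm (m : ℕ) :
    ∫ x in (-1:ℝ)..1, (legendreP m x)^2 = 2 / (2*(m:ℝ)+1) := by
  rw [legendreP_eq]
  have h : ∫ x in (-1:ℝ)..1,
      ((1 / (2^m * (Nat.factorial m : ℝ))) * (qq m m).eval x)^2
      = (1 / (2^m * (Nat.factorial m : ℝ)))^2 * ∫ x in (-1:ℝ)..1, ((qq m m).eval x)^2 := by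
    rw [← intervalIntegral.integral_const_mul]
    apply intervalIntegral.integral_congr
    intro x _; ring
  simp only []
  rw [h, J_zero]
  have hfm : (Nat.factorial m : ℝ) ≠ 0 := by positivity
  have hf2m : (Nat.factorial (2*m) : ℝ) ≠ 0 := by positivity
  have hf2m1 : (Nat.factorial (2*m+1) : ℝ) ≠ 0 := by positivity
  have h2 : (2:ℝ)^m ≠ 0 := by positivity
  have hrel : (Nat.factorial (2*m+1) : ℝ) = (2*(m:ℝ)+1) * (Nat.factorial (2*m) : ℝ) := by
    rw [Nat.factorial_succ]; push_cast; ring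
  have h21 : (2*(m:ℝ)+1) ≠ 0 := by positivity
  rw [hrel]
  field_simp
  ring

lemma legendre_norm_shift' (P : ℝ → ℝ) (hP : Continuous P) (V : ℝ)
    (hV : ∫ x in (-1:ℝ)..1, (P x)^2 = 2 * V) :
    ∫ u in (0:ℝ)..1, (P (1 - 2*u))^2 = V := by
  have hc : (-2:ℝ) ≠ 0 := by norm_num
  have key := intervalIntegral.integral_comp_mul_add (a := (0:ℝ)) (b := 1)
    (f := fun x => (P x)^2) hc 1
  simp only [smul_eq_mul, mul_zero, zero_add, mul_one] at key
  have h1 : ∫ u in (0:ℝ)..1, (P (1 - 2*u))^2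
      = ∫ u in (0:ℝ)..1, (fun x => (P x)^2) (-2*u+1) := by
    apply intervalIntegral.integral_congr; intro u _
    norm_num; ring_nf
  rw [h1, key]
  rw [show (-2:ℝ) + 1 = -1 by norm_num, intervalIntegral.integral_symm, hV]
  ring

lemma cs_int (f g : ℝ → ℝ) (hf : Continuous f) (hg : Continuous g)
    (hC : 0 < ∫ u in (0:ℝ)..1, (g u)^2) :
    (∫ u in (0:ℝ)..1, f u * g u) ≤
      Real.sqrt (∫ u in (0:ℝ)..1, (f u)^2) * Real.sqrt (∫ u in (0:ℝ)..1, (g u)^2) := by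
  set A := ∫ u in (0:ℝ)..1, (f u)^2 with hA
  set B := ∫ u in (0:ℝ)..1, f u * g u with hB
  set C := ∫ u in (0:ℝ)..1, (g u)^2 with hCdef
  have hAnn : 0 ≤ A := by
    rw [hA]; exact intervalIntegral.integral_nonneg zero_le_one (fun u _ => sq_nonneg _)
  set t := B / C with ht
  have key : 0 ≤ A - 2*t*B + t^2 * C := by
    have expand : ∫ u in (0:ℝ)..1, (f u - t * g u)^2 = A - 2*t*B + t^2 * C := by
      rw [intervalIntegral.integral_congr
        (g := fun u => (f u)^2 - (2*t)*(f u*g u) + t^2*(g u)^2) (fun u _ => by ring)]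
      have i1 : IntervalIntegrable (fun u => (f u)^2) volume 0 1 := by
        apply Continuous.intervalIntegrable; fun_prop
      have i2 : IntervalIntegrable (fun u => (2*t)*(f u * g u)) volume 0 1 := by
        apply Continuous.intervalIntegrable; fun_prop
      have i3 : IntervalIntegrable (fun u => t^2*(g u)^2) volume 0 1 := by
        apply Continuous.intervalIntegrable; fun_prop
      rw [intervalIntegral.integral_add (i1.sub i2) i3,
        intervalIntegral.integral_sub i1 i2,
        intervalIntegral.integral_const_mul, intervalIntegral.integral_const_mul]
    rw [← expand]
    exact intervalIntegral.integral_nonneg zero_le_one (fun u _ => sq_nonneg _)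
  have h1 : t * C = B := div_mul_cancel₀ B (ne_of_gt hC)
  have hB2 : B^2 ≤ A * C := by nlinarith [mul_nonneg key hC.le, h1]
  calc B ≤ |B| := le_abs_self B
    _ = Real.sqrt (B^2) := (Real.sqrt_sq_eq_abs B).symm
    _ ≤ Real.sqrt (A*C) := Real.sqrt_le_sqrt hB2
    _ = Real.sqrt A * Real.sqrt C := Real.sqrt_mul hAnn C

lemma power_int (a b : ℝ) (hab : a < b) (n : ℕ) :
    ∫ u in (0:ℝ)..1, ((b-a)*u + a)^n = (b^(n+1) - a^(n+1)) / ((b-a)*((n:ℝ)+1)) := by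
  have hc : b - a ≠ 0 := sub_ne_zero.mpr hab.ne'
  have key := intervalIntegral.integral_comp_mul_add (a := (0:ℝ)) (b := 1)
    (f := fun x => x^n) hc a
  simp only [smul_eq_mul, mul_zero, zero_add, mul_one] at key
  rw [key, integral_pow, show b - a + a = b by ring]
  field_simp
theorem stmt_10 (a b : ℝ) (ha : 0 < a) (hab : a < b) (m : ℕ) :
    Mconst a b m ≤
      Real.sqrt ((b ^ (2 * m + 3) - a ^ (2 * m + 3)) / ((b - a) * (2 * m + 3))) *
        Real.sqrt ((Nat.factorial (2 * m) : ℝ) * (Nat.factorial (2 * m + 1) : ℝ)) /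
          (Nat.factorial m : ℝ) := by
  have hfm : (0:ℝ) < (Nat.factorial m : ℝ) := by positivity
  set f : ℝ → ℝ := fun u => |legendreP m (1 - 2*u)| with hf
  set g : ℝ → ℝ := fun u => ((b-a)*u + a)^(m+1) with hg
  have hfc : Continuous f := by
    apply Continuous.abs
    exact (legendreP_cont m).comp (by fun_prop)
  have hgc : Continuous g := by fun_prop
  have EC : (∫ u in (0:ℝ)..1, (g u)^2)
      = (b^(2*m+3) - a^(2*m+3)) / ((b-a)*(2*(m:ℝ)+3)) := by
    have h1 : ∫ u in (0:ℝ)..1, (g u)^2 = ∫ u in (0:ℝ)..1, ((b-a)*u + a)^(2*m+2) := by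
      apply intervalIntegral.integral_congr; intro u _
      rw [hg]; dsimp only; rw [← pow_mul]; congr 1; ring
    rw [h1, power_int a b hab (2*m+2)]
    have e1 : 2*m+2+1 = 2*m+3 := by ring
    rw [e1]
    push_cast
    ring_nf
  have hCpos : 0 < ∫ u in (0:ℝ)..1, (g u)^2 := by
    rw [EC]
    apply div_pos
    · have h := pow_lt_pow_left₀ hab ha.le (n := 2*m+3) (by omega)
      linarith
    · have hba : (0:ℝ) < b - a := sub_pos.mpr hab
      positivity
  have EA : (∫ u in (0:ℝ)..1, (f u)^2) = 1/(2*(m:ℝ)+1) := by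
    have h1 : ∫ u in (0:ℝ)..1, (f u)^2
        = ∫ u in (0:ℝ)..1, (legendreP m (1 - 2*u))^2 := by
      apply intervalIntegral.integral_congr; intro u _
      rw [hf]; exact sq_abs _
    rw [h1]
    apply legendre_norm_shift' _ (legendreP_cont m)
    rw [legendre_norm]
    have h21 : (2*(m:ℝ)+1) ≠ 0 := by positivity
    field_simp
  have hCS := cs_int f g hfc hgc hCpos
  rw [EA, EC] at hCS
  rw [Mconst]
  have hcint : (∫ u in (0:ℝ)..1, |legendreP m (1 - 2 * u)| * ((b - a) * u + a) ^ (m + 1))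
      = ∫ u in (0:ℝ)..1, f u * g u := by
    apply intervalIntegral.integral_congr; intro u _; rfl
  rw [hcint]
  set c := (Nat.factorial (2*m+1) : ℝ) / (Nat.factorial m : ℝ) with hcdef
  have hc0 : 0 ≤ c := by positivity
  have step := mul_le_mul_of_nonneg_left hCS hc0
  refine step.trans_eq ?_
  have key : c * Real.sqrt (1/(2*(m:ℝ)+1))
      = Real.sqrt ((Nat.factorial (2*m) : ℝ) * (Nat.factorial (2*m+1) : ℝ))
        / (Nat.factorial m : ℝ) := by
    have h21 : (0:ℝ) < 2*(m:ℝ)+1 := by positivity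
    have hrel : (Nat.factorial (2*m+1) : ℝ) = (2*(m:ℝ)+1) * (Nat.factorial (2*m) : ℝ) := by
      rw [Nat.factorial_succ]; push_cast; ring
    have e1 : c^2 * (1/(2*(m:ℝ)+1))
        = ((Nat.factorial (2*m) : ℝ) * (Nat.factorial (2*m+1) : ℝ))
          / ((Nat.factorial m : ℝ))^2 := by
      rw [hcdef, hrel]
      field_simp
    have e2 : c * Real.sqrt (1/(2*(m:ℝ)+1)) = Real.sqrt (c^2 * (1/(2*(m:ℝ)+1))) := by
      rw [Real.sqrt_mul (sq_nonneg c), Real.sqrt_sq hc0]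
    rw [e2, e1, Real.sqrt_div (by positivity), Real.sqrt_sq hfm.le]
  rw [← mul_assoc, key]
  ring
end

section
/- Let z > 0 and w > 1, and define K₁(z,w) = ½∫_w^∞ exp(-(z/2)(t + 1/t)) dt. Then K₁(z,w) ≤ (w²/(z(w²-1))) exp(-(z/2)(w + 1/w)). -/
open MeasureTheory Real Set Filter

theorem stmt_13 (z w : ℝ) (hz : 0 < z) (hw : 1 < w) :
    (1 / 2) * ∫ t in Set.Ioi w, Real.exp (-(z / 2) * (t + 1 / t)) ≤
      (w ^ 2 / (z * (w ^ 2 - 1))) * Real.exp (-(z / 2) * (w + 1 / w)) := by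
  have hw0 : 0 < w := lt_trans one_pos hw
  set f : ℝ → ℝ := fun t => Real.exp (-(z / 2) * (t + 1 / t)) with hfdef
  set g : ℝ → ℝ := fun t => z / 2 * (1 - 1 / t ^ 2) * Real.exp (-(z / 2) * (t + 1 / t)) with hgdef
  set F : ℝ → ℝ := fun t => -Real.exp (-(z / 2) * (t + 1 / t)) with hFdef
  have hderiv : ∀ t ∈ Set.Ioi w, HasDerivAt F (g t) t := by
    intro t ht
    have ht1 : (1:ℝ) < t := lt_trans hw ht
    have ht0 : t ≠ 0 := by linarith
    have h1 : HasDerivAt (fun t : ℝ => t + 1 / t) (1 - 1 / t ^ 2) t := by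
      have := (hasDerivAt_id t).add ((hasDerivAt_inv ht0))
      simpa [one_div, sub_eq_add_neg, Pi.add_def] using this
    have h2 : HasDerivAt (fun t : ℝ => -(z / 2) * (t + 1 / t))
        (-(z / 2) * (1 - 1 / t ^ 2)) t := h1.const_mul _
    have h3 : HasDerivAt F (-(Real.exp (-(z / 2) * (t + 1 / t)) * (-(z / 2) * (1 - 1 / t ^ 2)))) t :=
      (h2.exp).neg
    convert h3 using 1
    show z / 2 * (1 - 1 / t ^ 2) * Real.exp (-(z / 2) * (t + 1 / t)) = _
    ring
  have hpos : ∀ t ∈ Set.Ioi w, 0 ≤ g t := by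
    intro t ht
    have ht1 : (1:ℝ) < t := lt_trans hw ht
    have h1 : 1 / t ^ 2 ≤ 1 := by
      rw [div_le_one (by positivity)]; nlinarith
    have h2 : 0 ≤ 1 - 1 / t ^ 2 := by linarith
    have := Real.exp_pos (-(z / 2) * (t + 1 / t))
    positivity
  have hcont : ContinuousOn F (Set.Ici w) := by
    intro t ht
    have ht0 : t ≠ 0 := ne_of_gt (lt_of_lt_of_le hw0 ht)
    have h1 : ContinuousAt (fun t : ℝ => t + 1 / t) t :=
      continuousAt_id.add (ContinuousAt.div continuousAt_const continuousAt_id ht0)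
    have h2 : ContinuousAt (fun t : ℝ => -(z / 2) * (t + 1 / t)) t := h1.const_mul _
    exact ((Real.continuous_exp.continuousAt.comp h2).neg).continuousWithinAt
  have htend : Tendsto F atTop (nhds 0) := by
    have hb : Tendsto (fun t : ℝ => (z / 2) * t) atTop atTop :=
      Filter.Tendsto.const_mul_atTop (by positivity) tendsto_id
    have hb' : Tendsto (fun t : ℝ => -((z / 2) * t)) atTop atBot :=
      tendsto_neg_atTop_atBot.comp hb
    have h1 : Tendsto (fun t : ℝ => -(z / 2) * (t + 1 / t)) atTop atBot := by
      apply tendsto_atBot_mono' _ _ hb'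
      filter_upwards [Filter.eventually_ge_atTop (1:ℝ)] with t ht
      have h0 : (0:ℝ) ≤ 1 / t := by positivity
      nlinarith
    have h2 : Tendsto (fun t : ℝ => Real.exp (-(z / 2) * (t + 1 / t))) atTop (nhds 0) :=
      Real.tendsto_exp_atBot.comp h1
    have h3 := h2.neg
    rw [neg_zero] at h3
    exact h3
  have hInt : IntegrableOn g (Set.Ioi w) :=
    integrableOn_Ioi_deriv_of_nonneg (hcont w Set.self_mem_Ici) hderiv hpos htend
  have hEq : ∫ t in Set.Ioi w, g t = 0 - F w :=
    integral_Ioi_of_hasDerivAt_of_nonneg (hcont w Set.self_mem_Ici) hderiv hpos htend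
  set c : ℝ := 2 * w ^ 2 / (z * (w ^ 2 - 1)) with hcdef
  have hw2 : (0:ℝ) < w ^ 2 - 1 := by nlinarith
  have hc0 : 0 < c := by positivity
  have hle : ∀ t ∈ Set.Ioi w, f t ≤ c * g t := by
    intro t ht
    have ht1 : (1:ℝ) < t := lt_trans hw ht
    have htw : w < t := ht
    have key : (1:ℝ) ≤ c * (z / 2 * (1 - 1 / t ^ 2)) := by
      rw [hcdef]
      rw [div_mul_eq_mul_div, le_div_iff₀ (by positivity)]
      have h1 : 1 - 1 / t ^ 2 ≥ 1 - 1 / w ^ 2 := by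
        have : 1 / t ^ 2 ≤ 1 / w ^ 2 := by
          apply one_div_le_one_div_of_le (by positivity)
          nlinarith
        linarith
      have h2 : 1 - 1 / w ^ 2 = (w ^ 2 - 1) / w ^ 2 := by field_simp
      have hw2' : (0:ℝ) < w ^ 2 := by positivity
      rw [h2] at h1
      have : 2 * w ^ 2 * (z / 2 * ((w ^ 2 - 1) / w ^ 2)) = z * (w ^ 2 - 1) := by
        field_simp
      nlinarith [mul_le_mul_of_nonneg_left h1 (by positivity : (0:ℝ) ≤ 2 * w ^ 2 * (z / 2))]
    calc f t = 1 * f t := by ring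
    _ ≤ (c * (z / 2 * (1 - 1 / t ^ 2))) * f t := by
        apply mul_le_mul_of_nonneg_right key (Real.exp_pos _).le
    _ = c * g t := by simp only [hgdef, hfdef]; ring
  have hfmeas : AEStronglyMeasurable f (volume.restrict (Set.Ioi w)) := by
    apply Measurable.aestronglyMeasurable
    apply Real.measurable_exp.comp
    have : Measurable (fun t : ℝ => t + 1 / t) := by
      simpa [one_div, Pi.add_def] using measurable_id.add (measurable_inv : Measurable (fun t : ℝ => t⁻¹))
    exact this.const_mul _
  have hfInt : IntegrableOn f (Set.Ioi w) := by
    apply Integrable.mono' (hInt.const_mul c) hfmeas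
    filter_upwards [ae_restrict_mem measurableSet_Ioi] with t ht
    rw [Real.norm_eq_abs, abs_of_pos (Real.exp_pos _)]
    exact hle t ht
  have hmono : ∫ t in Set.Ioi w, f t ≤ ∫ t in Set.Ioi w, c * g t := by
    apply setIntegral_mono_on hfInt (hInt.const_mul c) measurableSet_Ioi hle
  have hval : ∫ t in Set.Ioi w, c * g t = c * Real.exp (-(z / 2) * (w + 1 / w)) := by
    rw [MeasureTheory.integral_const_mul, hEq]
    simp [hFdef]
  have : (1/2 : ℝ) * c = w ^ 2 / (z * (w ^ 2 - 1)) := by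
    rw [hcdef]; ring
  calc (1 / 2) * ∫ t in Set.Ioi w, f t ≤ (1/2) * (c * Real.exp (-(z / 2) * (w + 1 / w))) := by
        rw [← hval]; linarith [hmono]
  _ = (w ^ 2 / (z * (w ^ 2 - 1))) * Real.exp (-(z / 2) * (w + 1 / w)) := by
        rw [← this]; ring
end
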